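/- arXiv:2202.00870 — 9 statements merged into one kernel-verified Lean document; each statement's English description precedes it below -/
import Mathlib

section
/- The sequence defined by a_0 = 1+d and a_{i+1} = 1+d - p/(1+a_i), with d > 0 and 0 < p < 1, converges to a_∞ = (d + sqrt(d^2 + 4(1+d-p)))/2. -/
theorem stmt_1 (d p : ℝ) (hd : 0 < d) (hp : 0 < p) (hp1 : p < 1)
    (a : ℕ → ℝ) (ha0 : a 0 = 1 + d)
    (ha : ∀ i, a (i + 1) = 1 + d - p / (1 + a i)) :
    Filter.Tendsto a Filter.atTop
      (nhds ((d + Real.sqrt (d ^ 2 + 4 * (1 + d - p))) / 2)) := by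
  set s := Real.sqrt (d ^ 2 + 4 * (1 + d - p)) with hs
  set L := (d + s) / 2 with hL
  have hsnn : 0 ≤ s := Real.sqrt_nonneg _
  have hs2 : s ^ 2 = d ^ 2 + 4 * (1 + d - p) := by
    rw [hs]; exact Real.sq_sqrt (by nlinarith)
  have hsd : d < s := by nlinarith
  have hLpos : 0 < L := by rw [hL]; nlinarith
  have hLfix : L ^ 2 - d * L - (1 + d - p) = 0 := by rw [hL]; nlinarith
  -- lower bound by induction
  have hlow : ∀ i, L ≤ a i := by
    intro i
    induction i with
    | zero => rw [ha0, hL]; nlinarith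
    | succ n ih =>
      rw [ha n]
      have h1L : 0 < 1 + L := by linarith
      have h1a : 0 < 1 + a n := by linarith
      have hdiv : p / (1 + a n) ≤ p / (1 + L) :=
        div_le_div_of_nonneg_left hp.le h1L (by linarith)
      have : L = 1 + d - p / (1 + L) := by
        field_simp
        nlinarith
      linarith
  -- antitone
  have hanti : ∀ n, a (n + 1) ≤ a n := by
    intro n
    have hln := hlow n
    have h1a : 0 < 1 + a n := by linarith
    rw [ha n, sub_le_iff_le_add, ← sub_le_iff_le_add']
    rw [le_div_iff₀ h1a]
    nlinarith
  have hmono : Antitone a := antitone_nat_of_succ_le hanti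
  have hbdd : BddBelow (Set.range a) := ⟨L, by rintro x ⟨i, rfl⟩; exact hlow i⟩
  have hc : Filter.Tendsto a Filter.atTop (nhds (⨅ i, a i)) :=
    tendsto_atTop_ciInf hmono hbdd
  set c := ⨅ i, a i with hcdef
  have hcL : L ≤ c := le_ciInf hlow
  have h1cp : (0 : ℝ) < 1 + c := by linarith
  have h1c : (1 : ℝ) + c ≠ 0 := ne_of_gt h1cp
  -- limit of shifted sequence
  have hshift : Filter.Tendsto (fun n => a (n + 1)) Filter.atTop (nhds c) :=
    hc.comp (Filter.tendsto_add_atTop_nat 1)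
  have hrhs : Filter.Tendsto (fun n => 1 + d - p / (1 + a n)) Filter.atTop
      (nhds (1 + d - p / (1 + c))) := by
    apply Filter.Tendsto.sub tendsto_const_nhds
    exact Filter.Tendsto.div tendsto_const_nhds (Filter.Tendsto.add tendsto_const_nhds hc) h1c
  have heq : c = 1 + d - p / (1 + c) := by
    have : Filter.Tendsto (fun n => a (n + 1)) Filter.atTop (nhds (1 + d - p / (1 + c))) := by
      simpa only [ha] using hrhs
    exact tendsto_nhds_unique hshift this
  have hcfix : c ^ 2 - d * c - (1 + d - p) = 0 := by
    have h1c' : (0:ℝ) < 1 + c := h1cp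
    field_simp at heq
    nlinarith
  have : c = L := by nlinarith
  rw [← this]
  exact hc
end

section
/- For the sequences a_0 = 1+d, a_{i+1} = 1+d - p/(1+a_i) and b_0 = 0, b_{i+1} = p(2 a_i ψ + b_i)/(1+a_i), with d > 0, p ∈ (0,1), ψ > 0, one has b_i < 2ψ for all i ≥ 0. -/
theorem stmt_4 (d p ψ : ℝ) (hd : 0 < d) (hp : 0 < p) (hp1 : p < 1) (hψ : 0 < ψ)
    (a b : ℕ → ℝ) (ha0 : a 0 = 1 + d)
    (ha : ∀ i, a (i + 1) = 1 + d - p / (1 + a i))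
    (hb0 : b 0 = 0)
    (hb : ∀ i, b (i + 1) = p * (2 * a i * ψ + b i) / (1 + a i)) :
    ∀ i, b i < 2 * ψ := by
  have hapos : ∀ i, 0 < a i := by
    intro i
    induction i with
    | zero => rw [ha0]; linarith
    | succ n ih =>
      rw [ha n]
      have h1 : p / (1 + a n) < p := div_lt_self hp (by linarith)
      linarith
  have hbnn : ∀ i, 0 ≤ b i := by
    intro i
    induction i with
    | zero => rw [hb0]
    | succ n ih =>
      rw [hb n]
      have h := hapos n
      positivity
  intro i
  induction i with
  | zero => rw [hb0]; positivity
  | succ n ih =>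
    rw [hb n]
    have h := hapos n
    have hb' := hbnn n
    rw [div_lt_iff₀ (by linarith : (0:ℝ) < 1 + a n)]
    nlinarith [mul_pos h hψ]
end

section
/- The sequence b_0 = 0, b_{i+1} = p(2 a_i ψ + b_i)/(1+a_i), where a_i is the decreasing sequence a_0 = 1+d, a_{i+1} = 1+d - p/(1+a_i), converges to b_∞ = 2 p a_∞ ψ / (1 + a_∞ − p), where a_∞ = (d + sqrt(d^2+4(1+d−p)))/2. -/
theorem stmt_5 (d p ψ : ℝ) (hd : 0 < d) (hp : 0 < p) (hp1 : p < 1) (hψ : 0 < ψ)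
    (a b : ℕ → ℝ) (ha0 : a 0 = 1 + d)
    (ha : ∀ i, a (i + 1) = 1 + d - p / (1 + a i))
    (hb0 : b 0 = 0)
    (hb : ∀ i, b (i + 1) = p * (2 * a i * ψ + b i) / (1 + a i)) :
    Filter.Tendsto b Filter.atTop
      (nhds (2 * p * ((d + Real.sqrt (d ^ 2 + 4 * (1 + d - p))) / 2) * ψ /
        (1 + (d + Real.sqrt (d ^ 2 + 4 * (1 + d - p))) / 2 - p))) := by
  set s := Real.sqrt (d ^ 2 + 4 * (1 + d - p)) with hs
  set L := (d + s) / 2 with hL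
  have hSpos : 0 < d ^ 2 + 4 * (1 + d - p) := by nlinarith
  have hs0 : 0 ≤ s := Real.sqrt_nonneg _
  have hs2 : s ^ 2 = d ^ 2 + 4 * (1 + d - p) := Real.sq_sqrt hSpos.le
  have hsd : d < s := by nlinarith
  have hsd2 : s ≤ d + 2 := by nlinarith
  have hLd : d < L := by rw [hL]; linarith
  have hLpos : 0 < L := hd.trans hLd
  have hL1d : L ≤ 1 + d := by rw [hL]; linarith
  have h1L : 0 < 1 + L := by linarith
  have hLsq : L ^ 2 = d * L + (1 + d - p) := by rw [hL]; nlinarith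
  have hfix : L = 1 + d - p / (1 + L) := by
    field_simp
    nlinarith [hLsq]
  clear_value L
  clear hL hs hs2 hsd hsd2 hs0 hSpos
  clear_value s
  -- bounds on a
  have haL : ∀ i, L ≤ a i ∧ a i - L ≤ p ^ i * (1 + d - L) := by
    intro i
    induction i with
    | zero =>
      rw [ha0, pow_zero, one_mul]
      exact ⟨by linarith, by linarith⟩
    | succ i ih =>
      obtain ⟨h1, h2⟩ := ih
      have hai1 : (0:ℝ) < 1 + a i := by linarith
      have e1 : a (i + 1) - L = p / (1 + L) - p / (1 + a i) := by
        rw [ha i]; linarith [hfix]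
      have e2 : p / (1 + L) - p / (1 + a i) = p * (a i - L) / ((1 + a i) * (1 + L)) := by
        field_simp; ring
      rw [e2] at e1
      have hden : (1:ℝ) ≤ (1 + a i) * (1 + L) := by nlinarith
      have hnum : 0 ≤ p * (a i - L) := mul_nonneg hp.le (by linarith)
      constructor
      · have : 0 ≤ p * (a i - L) / ((1 + a i) * (1 + L)) :=
          div_nonneg hnum (by positivity)
        linarith
      · have h3 : p * (a i - L) / ((1 + a i) * (1 + L)) ≤ p * (a i - L) :=
          div_le_self hnum hden
        have h4 : p * (a i - L) ≤ p * (p ^ i * (1 + d - L)) :=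
          mul_le_mul_of_nonneg_left h2 hp.le
        rw [e1]
        calc p * (a i - L) / ((1 + a i) * (1 + L)) ≤ p * (p ^ i * (1 + d - L)) := le_trans h3 h4
          _ = p ^ (i + 1) * (1 + d - L) := by ring
  -- fixed point for b
  have h1Lp : 0 < 1 + L - p := by linarith
  set B := 2 * p * L * ψ / (1 + L - p) with hB
  have hBfix : B * (1 + L) = p * (2 * L * ψ + B) := by
    rw [hB]; field_simp; ring
  clear_value B
  set K := |2 * ψ - B| with hK
  set C := (1 + d - L) * K with hC
  have hK0 : 0 ≤ K := abs_nonneg _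
  have hC0 : 0 ≤ C := mul_nonneg (by linarith) hK0
  clear_value K C
  -- main estimate on b
  have hbB : ∀ i, |b i - B| ≤ (|B| + C * i) * p ^ i := by
    intro i
    induction i with
    | zero => simp [hb0]
    | succ i ih =>
      obtain ⟨h1, h2⟩ := haL i
      have hai1 : (0:ℝ) < 1 + a i := by linarith
      have e : (b (i + 1) - B) * ((1 + a i) * (1 + L)) =
          p * ((1 + L) * (b i - B) + (a i - L) * (2 * ψ - B)) := by
        rw [hb i]
        field_simp
        linear_combination (-(1 + a i)) * hBfix
      have habs : |b (i + 1) - B| * ((1 + a i) * (1 + L)) ≤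
          p * ((1 + L) * |b i - B| + (a i - L) * K) := by
        have hd0 : (0:ℝ) < (1 + a i) * (1 + L) := by positivity
        rw [← abs_of_pos hd0, ← abs_mul, e]
        have t1 : |(1 + L) * (b i - B) + (a i - L) * (2 * ψ - B)| ≤
            (1 + L) * |b i - B| + (a i - L) * K := by
          calc |(1 + L) * (b i - B) + (a i - L) * (2 * ψ - B)|
              ≤ |(1 + L) * (b i - B)| + |(a i - L) * (2 * ψ - B)| := abs_add_le _ _
            _ = (1 + L) * |b i - B| + (a i - L) * K := by
                rw [abs_mul, abs_mul, abs_of_pos h1L, abs_of_nonneg (by linarith : (0:ℝ) ≤ a i - L), ← hK]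
        rw [abs_mul, abs_of_pos hp]
        exact mul_le_mul_of_nonneg_left t1 hp.le
      have hp0i : (0:ℝ) ≤ p ^ i := pow_nonneg hp.le i
      have h5 : (0:ℝ) ≤ C * ((i:ℝ) + 1) := mul_nonneg hC0 (by positivity)
      have hT0 : (0:ℝ) ≤ (|B| + C * ((i:ℝ) + 1)) * p ^ (i + 1) :=
        mul_nonneg (by linarith [abs_nonneg B]) (by positivity)
      have habs2 : |b (i + 1) - B| * ((1 + a i) * (1 + L)) ≤
          ((|B| + C * ((i:ℝ) + 1)) * p ^ (i + 1)) * (1 + L) := by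
        have hKa : (a i - L) * K ≤ p ^ i * (1 + d - L) * K :=
          mul_le_mul_of_nonneg_right h2 hK0
        have hbb : (1 + L) * |b i - B| ≤ (1 + L) * ((|B| + C * i) * p ^ i) :=
          mul_le_mul_of_nonneg_left ih h1L.le
        calc |b (i + 1) - B| * ((1 + a i) * (1 + L))
            ≤ p * ((1 + L) * |b i - B| + (a i - L) * K) := habs
          _ ≤ p * ((1 + L) * ((|B| + C * i) * p ^ i) + p ^ i * (1 + d - L) * K) := by
              apply mul_le_mul_of_nonneg_left _ hp.le; linarith
          _ ≤ ((|B| + C * ((i:ℝ) + 1)) * p ^ (i + 1)) * (1 + L) := by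
              rw [pow_succ]
              have key : ((|B| + C * ((i:ℝ) + 1)) * (p ^ i * p)) * (1 + L) -
                  p * ((1 + L) * ((|B| + C * (i:ℝ)) * p ^ i) + p ^ i * (1 + d - L) * K) =
                  p * p ^ i * C * L := by rw [hC]; ring
              have pos : 0 ≤ p * p ^ i * C * L :=
                mul_nonneg (mul_nonneg (mul_nonneg hp.le hp0i) hC0) hLpos.le
              linarith
      have hmono : ((|B| + C * ((i:ℝ) + 1)) * p ^ (i + 1)) * (1 + L) ≤
          ((|B| + C * ((i:ℝ) + 1)) * p ^ (i + 1)) * ((1 + a i) * (1 + L)) := by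
        apply mul_le_mul_of_nonneg_left _ hT0
        have : 1 * (1 + L) ≤ (1 + a i) * (1 + L) :=
          mul_le_mul_of_nonneg_right (by linarith) h1L.le
        linarith
      have hd0 : (0:ℝ) < (1 + a i) * (1 + L) := by positivity
      have := le_trans habs2 hmono
      have h6 := le_of_mul_le_mul_right this hd0
      rw [Nat.cast_add, Nat.cast_one]
      exact h6
  -- convergence
  have hten : Filter.Tendsto (fun i : ℕ => (|B| + C * i) * p ^ i) Filter.atTop (nhds 0) := by
    have t1 := (tendsto_pow_atTop_nhds_zero_of_lt_one hp.le hp1).const_mul |B|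
    have t2 := (tendsto_self_mul_const_pow_of_lt_one hp.le hp1).const_mul C
    have := t1.add t2
    simp only [mul_zero, add_zero] at this
    refine this.congr fun i => by ring
  have hzero : Filter.Tendsto (fun i => b i - B) Filter.atTop (nhds 0) :=
    squeeze_zero_norm (fun n => by simpa [Real.norm_eq_abs] using hbB n) hten
  have := hzero.add_const B
  simpa using this
end

section
/- The sequence b_i satisfies b_i ≤ 2p(1+d)ψ/(1−p) for all i ≥ 0, where b_0 = 0 and b_{i+1} = p(2 a_i ψ + b_i)/(1+a_i) with a_i ≤ 1+d. -/
theorem stmt_6 (d p ψ : ℝ) (hd : 0 < d) (hp : 0 < p) (hp1 : p < 1) (hψ : 0 < ψ)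
    (a b : ℕ → ℝ) (ha : ∀ i, 0 < a i ∧ a i ≤ 1 + d)
    (hb0 : b 0 = 0)
    (hb : ∀ i, b (i + 1) = p * (2 * a i * ψ + b i) / (1 + a i)) :
    ∀ i, b i ≤ 2 * p * (1 + d) * ψ / (1 - p) := by
  have h1p : 0 < 1 - p := by linarith
  have hM : 0 ≤ 2 * p * (1 + d) * ψ / (1 - p) := by positivity
  intro i
  induction i with
  | zero => rw [hb0]; exact hM
  | succ n ih =>
    obtain ⟨ha0, ha1⟩ := ha n
    rw [hb n, div_le_iff₀ (by linarith)]
    rw [div_mul_eq_mul_div, le_div_iff₀ (by linarith)] at *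
    nlinarith [mul_pos hp hψ, mul_nonneg (mul_nonneg hp.le hψ.le) ha0.le]
end

section
/- For all x ∈ [0, ψ] and all i ≥ 0, the quantity (x + ψ − b_i/2)/(1 + a_i) lies strictly between 0 and ψ, where a_i, b_i are defined by a_0 = 1+d, a_{i+1} = 1+d − p/(1+a_i), b_0 = 0, b_{i+1} = p(2 a_i ψ + b_i)/(1+a_i). -/
theorem stmt_7 (d p ψ : ℝ) (hd : 0 < d) (hp : 0 < p) (hp1 : p < 1) (hψ : 0 < ψ)
    (a b : ℕ → ℝ) (ha0 : a 0 = 1 + d)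
    (ha : ∀ i, a (i + 1) = 1 + d - p / (1 + a i))
    (hb0 : b 0 = 0)
    (hb : ∀ i, b (i + 1) = p * (2 * a i * ψ + b i) / (1 + a i)) :
    ∀ x ∈ Set.Icc (0 : ℝ) ψ, ∀ i,
      0 < (x + ψ - b i / 2) / (1 + a i) ∧ (x + ψ - b i / 2) / (1 + a i) < ψ := by
  have key : ∀ i, d < a i ∧ 0 ≤ b i ∧ b i ≤ 2 * p * ψ ∧ 0 < ψ * (a i - 1) + b i / 2 := by
    intro i
    induction i with
    | zero =>
      refine ⟨by rw [ha0]; linarith, by rw [hb0], by rw [hb0]; positivity, ?_⟩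
      rw [ha0, hb0]; nlinarith
    | succ n ih =>
      obtain ⟨h1, h2, h3, h4⟩ := ih
      have hpa : (0:ℝ) < 1 + a n := by linarith
      have hdiv : p / (1 + a n) < 1 := by
        rw [div_lt_one hpa]; linarith
      have hdiv0 : 0 < p / (1 + a n) := div_pos hp hpa
      refine ⟨by rw [ha]; linarith, ?_, ?_, ?_⟩
      · rw [hb]; exact div_nonneg (by nlinarith) hpa.le
      · rw [hb, div_le_iff₀ hpa]; nlinarith
      · rw [ha, hb]
        have heq : ψ * (1 + d - p / (1 + a n) - 1) + p * (2 * a n * ψ + b n) / (1 + a n) / 2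
            = ψ * d + p * (ψ * (a n - 1) + b n / 2) / (1 + a n) := by
          field_simp; ring
        rw [heq]
        have : 0 < p * (ψ * (a n - 1) + b n / 2) / (1 + a n) := by positivity
        nlinarith
  rintro x ⟨hx0, hx1⟩ i
  obtain ⟨h1, h2, h3, h4⟩ := key i
  have hpa : (0:ℝ) < 1 + a i := by linarith
  constructor
  · apply div_pos _ hpa; nlinarith
  · rw [div_lt_iff₀ hpa]; nlinarith
end

section
/- The optimal policy π*(x) = (x + ψ − b_∞/2)/(1 + a_∞), with a_∞ = (d + sqrt(d^2+4(1+d−p)))/2 and b_∞ = 2 p a_∞ ψ/(1 + a_∞ − p), satisfies 0 < π*(x) < ψ for all x ∈ [0, ψ]. -/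
theorem stmt_9 (d p ψ : ℝ) (hd : 0 < d) (hp : 0 < p) (hp1 : p < 1) (hψ : 0 < ψ) :
    ∀ x ∈ Set.Icc (0 : ℝ) ψ,
      0 < (x + ψ - (2 * p * ((d + Real.sqrt (d ^ 2 + 4 * (1 + d - p))) / 2) * ψ /
            (1 + (d + Real.sqrt (d ^ 2 + 4 * (1 + d - p))) / 2 - p)) / 2) /
          (1 + (d + Real.sqrt (d ^ 2 + 4 * (1 + d - p))) / 2) ∧
      (x + ψ - (2 * p * ((d + Real.sqrt (d ^ 2 + 4 * (1 + d - p))) / 2) * ψ /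
            (1 + (d + Real.sqrt (d ^ 2 + 4 * (1 + d - p))) / 2 - p)) / 2) /
          (1 + (d + Real.sqrt (d ^ 2 + 4 * (1 + d - p))) / 2) < ψ := by
  intro x hx
  obtain ⟨hx0, hx1⟩ := hx
  set s := Real.sqrt (d ^ 2 + 4 * (1 + d - p)) with hs
  have hsnn : 0 ≤ s := Real.sqrt_nonneg _
  have hs2 : s ^ 2 = d ^ 2 + 4 * (1 + d - p) := Real.sq_sqrt (by nlinarith)
  have hsd : d < s := by nlinarith
  have ha : 0 < (d + s) / 2 := by linarith
  have hD1 : 0 < 1 + (d + s) / 2 - p := by linarith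
  have hD2 : 0 < 1 + (d + s) / 2 := by linarith
  set B := 2 * p * ((d + s) / 2) * ψ / (1 + (d + s) / 2 - p) with hB
  have hBlt : B / 2 < ψ := by
    rw [hB, div_lt_iff₀ (by norm_num : (0:ℝ) < 2)] at *
    rw [div_lt_iff₀ hD1]
    nlinarith [mul_pos (mul_pos hψ hD2) (by linarith : (0:ℝ) < 1 - p)]
  have hBlt2 : ψ - B / 2 < ψ * ((d + s) / 2) := by
    have h1 : 2 * ψ * (1 - (d + s) / 2) * (1 + (d + s) / 2 - p) <
        2 * p * ((d + s) / 2) * ψ := by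
      nlinarith [hs2, mul_pos hψ hd, mul_nonneg (mul_pos hψ hd).le hsnn, mul_pos (mul_pos hψ hd) hd]
    have h2 : 2 * ψ * (1 - (d + s) / 2) < B := by
      rw [hB, lt_div_iff₀ hD1]; linarith
    linarith
  refine ⟨div_pos (by linarith) hD2, ?_⟩
  rw [div_lt_iff₀ hD2]
  nlinarith
end

section
/- With a'_{-1}=0, b'_{-1}=0, a'_{k+1}=1/(4+2d−2p a'_k), b'_{k+1}=((2−p)ψ + p b'_k)/(4+2d−2p a'_k), the sequence b'_k converges to b'_∞ = a'_∞ (2−p) ψ / (1 − a'_∞ p), where a'_∞ = (4+2d)/(4p) − sqrt((2+d)^2−2p)/(2p). -/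
set_option maxHeartbeats 1000000


/-- `a k`, `b k` represent `a'_{k-1}`, `b'_{k-1}` of the paper. -/
theorem stmt_13 (d p ψ : ℝ) (hd : 0 < d) (hp : 0 < p) (hp1 : p ≤ 1) (hψ : 0 < ψ)
    (a b : ℕ → ℝ) (ha0 : a 0 = 0) (hb0 : b 0 = 0)
    (ha : ∀ k, a (k + 1) = 1 / (4 + 2 * d - 2 * p * a k))
    (hb : ∀ k, b (k + 1) = ((2 - p) * ψ + p * b k) / (4 + 2 * d - 2 * p * a k)) :
    Filter.Tendsto b Filter.atTop
      (nhds (((4 + 2 * d) / (4 * p) - Real.sqrt ((2 + d) ^ 2 - 2 * p) / (2 * p)) *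
          (2 - p) * ψ /
        (1 - ((4 + 2 * d) / (4 * p) - Real.sqrt ((2 + d) ^ 2 - 2 * p) / (2 * p)) * p))) := by
  set Q : ℝ := 4 + 2 * d with hQdef
  have hQ : 4 < Q := by simp [hQdef]; linarith
  set s : ℝ := Real.sqrt (Q ^ 2 - 8 * p) with hsdef
  have hs2 : s ^ 2 = Q ^ 2 - 8 * p := Real.sq_sqrt (by nlinarith)
  have hs0 : 0 < s := Real.sqrt_pos.mpr (by nlinarith)
  have hsQ : s < Q := by nlinarith
  set L : ℝ := (Q - s) / (4 * p) with hLdef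
  have hL0 : 0 < L := by
    apply div_pos (by linarith) (by linarith)
  have hQsL : 4 * p * L = Q - s := by
    rw [hLdef]; field_simp
  have hfix : 2 * p * L ^ 2 - Q * L + 1 = 0 := by
    nlinarith [hQsL]
  have hdenL : 0 < Q - 2 * p * L := by nlinarith
  have hpL : p * L < 1 := by
    have : s > Q - 4 := by nlinarith
    nlinarith [hQsL]
  clear_value Q s L
  -- induction on a
  have key : ∀ k, 0 ≤ a k ∧ a k ≤ L ∧ a k ≤ a (k + 1) := by
    intro k
    induction k with
    | zero =>
      have hden0 : (0:ℝ) < Q - 2 * p * 0 := by norm_num; linarith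
      refine ⟨le_of_eq ha0.symm, le_of_lt (ha0 ▸ hL0), ?_⟩
      rw [ha0, ha 0, ha0]
      exact le_of_lt (div_pos one_pos hden0)
    | succ n ih =>
      obtain ⟨h0, hle, hmono⟩ := ih
      have hden : 0 < Q - 2 * p * a n := by nlinarith
      have hval : a (n + 1) = 1 / (Q - 2 * p * a n) := ha n
      have h0' : 0 ≤ a (n + 1) := by rw [hval]; positivity
      have hle' : a (n + 1) ≤ L := by
        rw [hval, div_le_iff₀ hden]
        nlinarith
      have hden' : 0 < Q - 2 * p * a (n + 1) := by nlinarith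
      have hval' : a (n + 2) = 1 / (Q - 2 * p * a (n + 1)) := ha (n + 1)
      refine ⟨h0', hle', ?_⟩
      rw [hval, hval']
      gcongr
  have hmono : Monotone a := monotone_nat_of_le_succ fun n => (key n).2.2
  have hbdd : BddAbove (Set.range a) := ⟨L, by rintro x ⟨k, rfl⟩; exact (key k).2.1⟩
  set A : ℝ := ⨆ k, a k with hAdef
  have hA : Filter.Tendsto a Filter.atTop (nhds A) := tendsto_atTop_ciSup hmono hbdd
  have hAle : A ≤ L := ciSup_le fun k => (key k).2.1
  have hA0 : 0 ≤ A := le_trans (key 0).1 (le_ciSup hbdd 0)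
  clear_value A
  have hdenA : 0 < Q - 2 * p * A := by nlinarith
  -- limit equation for a
  have hshift : Filter.Tendsto (fun k => a (k + 1)) Filter.atTop (nhds A) :=
    (Filter.tendsto_add_atTop_iff_nat 1).mpr hA
  have hfun : Filter.Tendsto (fun k => 1 / (Q - 2 * p * a k)) Filter.atTop
      (nhds (1 / (Q - 2 * p * A))) := by
    apply Filter.Tendsto.div tendsto_const_nhds
      (tendsto_const_nhds.sub (hA.const_mul (2 * p))) (ne_of_gt hdenA)
  have hAeq : A = 1 / (Q - 2 * p * A) := by
    apply tendsto_nhds_unique hshift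
    convert hfun using 2 with k
    exact ha k
  have hAquad : 2 * p * A ^ 2 - Q * A + 1 = 0 := by
    rw [eq_div_iff (ne_of_gt hdenA)] at hAeq
    linear_combination -hAeq
  have hAL : A = L := by
    have h1 : (A - L) * (2 * p * (A + L) - Q) = 0 := by linear_combination hAquad - hfix
    have hpApL : p * A ≤ p * L := mul_le_mul_of_nonneg_left hAle hp.le
    have h2 : 2 * p * (A + L) - Q < 0 := by linarith
    rcases mul_eq_zero.mp h1 with h | h
    · linarith
    · linarith
  -- b sequence
  have hpL1 : 0 < 1 - p * L := by linarith
  set B : ℝ := L * ((2 - p) * ψ) / (1 - p * L) with hBdef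
  have hB0 : 0 ≤ B := by
    apply div_nonneg _ (le_of_lt hpL1)
    have : (0:ℝ) ≤ (2 - p) * ψ := by nlinarith
    positivity
  have hBmul : B * (1 - p * L) = L * ((2 - p) * ψ) := by
    rw [hBdef]; exact div_mul_cancel₀ _ (ne_of_gt hpL1)
  clear_value B
  have hBeq : B = L * ((2 - p) * ψ + p * B) := by linear_combination hBmul
  have keyb : ∀ k, 0 ≤ b k ∧ b k ≤ B ∧ b k ≤ b (k + 1) := by
    intro k
    induction k with
    | zero =>
      have hden : 0 < Q - 2 * p * a 0 := by
        obtain ⟨h0, hle, _⟩ := key 0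
        nlinarith
      refine ⟨le_of_eq hb0.symm, hb0 ▸ hB0, ?_⟩
      rw [hb0, hb 0, hb0]
      have : (0:ℝ) ≤ (2 - p) * ψ := by nlinarith
      positivity
    | succ n ih =>
      obtain ⟨hb0', hble, hbmono⟩ := ih
      obtain ⟨ha0', hale, hamono⟩ := key n
      obtain ⟨ha0'', hale', _⟩ := key (n + 1)
      have hden : 0 < Q - 2 * p * a n := by nlinarith
      have hden' : 0 < Q - 2 * p * a (n + 1) := by nlinarith
      have hval : b (n + 1) = ((2 - p) * ψ + p * b n) * a (n + 1) := by
        rw [hb n, ha n]; ring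
      have hval' : b (n + 2) = ((2 - p) * ψ + p * b (n + 1)) * a (n + 2) := by
        rw [hb (n + 1), ha (n + 1)]; ring
      have han1 : 0 ≤ a (n + 1) := ha0''
      have h6 : (0:ℝ) ≤ (2 - p) * ψ := mul_nonneg (by linarith) hψ.le
      have hnum : (0:ℝ) ≤ (2 - p) * ψ + p * b n :=
        add_nonneg h6 (mul_nonneg hp.le hb0')
      have hbn1 : 0 ≤ b (n + 1) := le_trans hb0' hbmono
      refine ⟨by rw [hval]; exact mul_nonneg hnum han1, ?_, ?_⟩
      · rw [hval]
        have h7 : p * b n ≤ p * B := mul_le_mul_of_nonneg_left hble hp.le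
        have h8 : (0:ℝ) ≤ (2 - p) * ψ + p * B :=
          add_nonneg h6 (mul_nonneg hp.le hB0)
        calc ((2 - p) * ψ + p * b n) * a (n + 1)
            ≤ ((2 - p) * ψ + p * B) * L := by
              apply mul_le_mul (by linarith) hale' han1 (by linarith)
          _ = B := by linear_combination -hBeq
      · rw [hval, hval']
        have ha2 : a (n + 1) ≤ a (n + 2) := (key (n + 1)).2.2
        have h5 : p * b n ≤ p * b (n + 1) := mul_le_mul_of_nonneg_left hbmono hp.le
        have h9 : (0:ℝ) ≤ (2 - p) * ψ + p * b (n + 1) :=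
          add_nonneg h6 (mul_nonneg hp.le hbn1)
        apply mul_le_mul (by linarith) ha2 han1 (by linarith)
  have hbmono : Monotone b := monotone_nat_of_le_succ fun n => (keyb n).2.2
  have hbbdd : BddAbove (Set.range b) := ⟨B, by rintro x ⟨k, rfl⟩; exact (keyb k).2.1⟩
  set B' : ℝ := ⨆ k, b k with hB'def
  have hB' : Filter.Tendsto b Filter.atTop (nhds B') := tendsto_atTop_ciSup hbmono hbbdd
  clear_value B'
  have hbshift : Filter.Tendsto (fun k => b (k + 1)) Filter.atTop (nhds B') :=
    (Filter.tendsto_add_atTop_iff_nat 1).mpr hB'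
  have hbfun : Filter.Tendsto (fun k => ((2 - p) * ψ + p * b k) / (Q - 2 * p * a k))
      Filter.atTop (nhds (((2 - p) * ψ + p * B') / (Q - 2 * p * A))) := by
    apply Filter.Tendsto.div
      (tendsto_const_nhds.add (hB'.const_mul p))
      (tendsto_const_nhds.sub (hA.const_mul (2 * p))) (ne_of_gt hdenA)
  have hB'eq : B' = ((2 - p) * ψ + p * B') / (Q - 2 * p * A) := by
    apply tendsto_nhds_unique hbshift
    convert hbfun using 2 with k
    exact hb k
  have hLval : L = 1 / (Q - 2 * p * L) := by
    rw [eq_div_iff (ne_of_gt hdenL)]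
    nlinarith
  have hB'B : B' = B := by
    rw [hAL] at hB'eq
    rw [eq_div_iff (ne_of_gt hdenL)] at hB'eq
    have hQL : (Q - 2 * p * L) * L = 1 := by linear_combination -hfix
    have hthis : B' * (1 - p * L) = L * ((2 - p) * ψ) := by
      linear_combination L * hB'eq - B' * hQL
    rw [hBdef, eq_div_iff (ne_of_gt hpL1)]
    linear_combination hthis
  -- rewrite the target constant
  have hsqrt : Real.sqrt ((2 + d) ^ 2 - 2 * p) = s / 2 := by
    rw [show (2 + d) ^ 2 - 2 * p = (s / 2) ^ 2 by rw [div_pow]; rw [hs2]; ring_nf; nlinarith]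
    exact Real.sqrt_sq (by positivity)
  have hLexpr : Q / (4 * p) - Real.sqrt ((2 + d) ^ 2 - 2 * p) / (2 * p) = L := by
    rw [hsqrt, hLdef]
    field_simp
    ring
  rw [hLexpr]
  have htarget : L * (2 - p) * ψ / (1 - L * p) = B := by
    rw [hBdef]; ring_nf
  rw [htarget, ← hB'B]
  exact hB'
end

section
/- For all k ≥ 0 and all x ∈ [0, ψ], the affine function a'_k x + b'_k satisfies 0 < a'_k x + b'_k < ψ, where a'_k, b'_k are defined by a'_{-1}=0, b'_{-1}=0, a'_k = 1/(4+2d−2p a'_{k−1}), b'_k = ((2−p)ψ + p b'_{k−1})/(4+2d−2p a'_{k−1}). -/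
/-- `a k`, `b k` represent `a'_{k-1}`, `b'_{k-1}` of the paper; the claim is for
paper indices `k ≥ 0`, i.e. Lean indices `k ≥ 1`. -/
theorem stmt_14 (d p ψ : ℝ) (hd : 0 < d) (hp : 0 < p) (hp1 : p ≤ 1) (hψ : 0 < ψ)
    (a b : ℕ → ℝ) (ha0 : a 0 = 0) (hb0 : b 0 = 0)
    (ha : ∀ k, a (k + 1) = 1 / (4 + 2 * d - 2 * p * a k))
    (hb : ∀ k, b (k + 1) = ((2 - p) * ψ + p * b k) / (4 + 2 * d - 2 * p * a k)) :
    ∀ k ≥ 1, ∀ x ∈ Set.Icc (0 : ℝ) ψ,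
      0 < a k * x + b k ∧ a k * x + b k < ψ := by
  have key : ∀ k, 0 ≤ a k ∧ a k ≤ 1/2 ∧ 0 ≤ b k ∧ a k * ψ + b k ≤ ψ := by
    intro k
    induction k with
    | zero =>
      refine ⟨le_of_eq ha0.symm, ?_, le_of_eq hb0.symm, ?_⟩ <;> rw [ha0] <;>
        first | linarith | (rw [hb0]; linarith)
    | succ m ih =>
      obtain ⟨h1, h2, h3, h4⟩ := ih
      have hD : (3:ℝ) ≤ 4 + 2 * d - 2 * p * a m := by nlinarith
      have hD0 : (0:ℝ) < 4 + 2 * d - 2 * p * a m := by linarith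
      rw [ha, hb]
      refine ⟨by positivity, ?_, ?_, ?_⟩
      · rw [div_le_iff₀ hD0]; linarith
      · apply div_nonneg _ hD0.le; nlinarith
      · have heq : 1 / (4 + 2 * d - 2 * p * a m) * ψ +
            ((2 - p) * ψ + p * b m) / (4 + 2 * d - 2 * p * a m)
            = (ψ + ((2 - p) * ψ + p * b m)) / (4 + 2 * d - 2 * p * a m) := by
          field_simp
        rw [heq, div_le_iff₀ hD0]
        nlinarith
  intro k hk x hx
  obtain ⟨m, rfl⟩ : ∃ m, k = m + 1 := ⟨k - 1, (Nat.succ_pred_eq_of_pos hk).symm⟩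
  obtain ⟨h1, h2, h3, h4⟩ := key m
  obtain ⟨hx0, hxψ⟩ := hx
  have hD : (3:ℝ) ≤ 4 + 2 * d - 2 * p * a m := by nlinarith
  have hD0 : (0:ℝ) < 4 + 2 * d - 2 * p * a m := by linarith
  have haa : 0 < a (m + 1) := by rw [ha]; positivity
  have hbb : 0 < b (m + 1) := by
    rw [hb]; apply div_pos _ hD0; nlinarith
  constructor
  · nlinarith
  · have hle : a (m + 1) * x + b (m + 1) ≤ a (m + 1) * ψ + b (m + 1) := by nlinarith
    have hlt : a (m + 1) * ψ + b (m + 1) < ψ := by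
      rw [ha, hb]
      have heq : 1 / (4 + 2 * d - 2 * p * a m) * ψ +
          ((2 - p) * ψ + p * b m) / (4 + 2 * d - 2 * p * a m)
          = (ψ + ((2 - p) * ψ + p * b m)) / (4 + 2 * d - 2 * p * a m) := by
        field_simp
      rw [heq, div_lt_iff₀ hD0]
      nlinarith
    linarith
end

section
/- If a'_k ψ + b'_k < ψ and a'_k < (1+2d)/p, then a'_{k+1} ψ + b'_{k+1} < ψ, where a'_{k+1} = 1/(2(2+d − p a'_k)) and b'_{k+1} = ((2−p)ψ + p b'_k)/(2(2+d − p a'_k)). -/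
theorem stmt_15 (d p ψ ak bk : ℝ) (hd : 0 < d) (hp : 0 < p) (hp1 : p ≤ 1)
    (hψ : 0 < ψ) (hak0 : 0 ≤ ak) (hbk : 0 ≤ bk)
    (hpos : 0 < 2 + d - p * ak)
    (hak : ak < (1 + 2 * d) / p)
    (hyp : ak * ψ + bk < ψ) :
    (1 / (2 * (2 + d - p * ak))) * ψ +
      ((2 - p) * ψ + p * bk) / (2 * (2 + d - p * ak)) < ψ := by
  have h2 : 0 < 2 * (2 + d - p * ak) := by linarith
  rw [one_div, inv_mul_eq_div, ← add_div, div_lt_iff₀ h2]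
  have hak' : p * ak < 1 + 2 * d := by
    have := (lt_div_iff₀ hp).mp hak
    linarith
  nlinarith [mul_pos hp hψ, mul_lt_mul_of_pos_left hyp hp]
end
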